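/- Let β, r, θ, c > 0 with β > r, c > 1/3, β c > β - 2r, and c < β²/(27 r²). Then the cubic f(u) = β c u³ - β u + 2r has exactly two zeros 0 < û₁ < û₂ < 1 in the interval (0,1), Ψ₂ attains a local maximum at û₁ and a local minimum at û₂, and if Ψ₂(û₂) < θ < Ψ₂(û₁) and θ < (β - r)(1 + c), then the equation Ψ₂(u) = θ has exactly three solutions in (0,1); consequently V₂ has exactly three positive fixed points. -/

import Mathlib

/-- The map `V₂(u,v) = (u(2-u) - u v, β u v + (1-r) v - θ u² v/(1 + c u²))`. -/
noncomputable def V2 (β r θ c : ℝ) (p : ℝ × ℝ) : ℝ × ℝ :=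
  (p.1 * (2 - p.1) - p.1 * p.2,
   β * p.1 * p.2 + (1 - r) * p.2 - θ * p.1 ^ 2 * p.2 / (1 + c * p.1 ^ 2))

/-- `Ψ₂(u) = (βu - r)(1 + cu²)/u²`. -/
noncomputable def Psi2 (β r c u : ℝ) : ℝ := (β * u - r) * (1 + c * u ^ 2) / u ^ 2

/-- The cubic `f(u) = βcu³ - βu + 2r`. -/
noncomputable def fcub (β r c u : ℝ) : ℝ := β * c * u ^ 3 - β * u + 2 * r

lemma fcub_hasDerivAt (β r c u : ℝ) :
    HasDerivAt (fcub β r c) (β * (3 * c * u ^ 2 - 1)) u := by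
  have h := (((hasDerivAt_pow 3 u).const_mul (β * c)).sub
      ((hasDerivAt_id u).const_mul β)).add_const (2 * r)
  have : fcub β r c = fun u : ℝ => β * c * u ^ 3 - β * id u + 2 * r := by
    funext x; simp [fcub]
  rw [this]; exact h.congr_deriv (by norm_num; ring)

lemma fcub_cont (β r c : ℝ) : Continuous (fcub β r c) := by
  unfold fcub; continuity

lemma psi2_hasDerivAt (β r c : ℝ) {u : ℝ} (hu : u ≠ 0) :
    HasDerivAt (Psi2 β r c) (fcub β r c u / u ^ 3) u := by
  have h1 : HasDerivAt (fun u : ℝ => (β * u - r) * (1 + c * u ^ 2))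
      ((β * 1) * (1 + c * u ^ 2) + (β * u - r) * (c * (2 * u ^ 1))) u :=
    (((hasDerivAt_id u).const_mul β).sub_const r).mul
      (((hasDerivAt_pow 2 u).const_mul c).const_add 1)
  have h3 := h1.div (hasDerivAt_pow 2 u) (pow_ne_zero 2 hu)
  exact h3.congr_deriv (by unfold fcub; field_simp; ring)

lemma psi2_contOn (β r c : ℝ) {s : Set ℝ} (hs : ∀ x ∈ s, x ≠ 0) :
    ContinuousOn (Psi2 β r c) s := fun x hx =>
  ((psi2_hasDerivAt β r c (hs x hx)).continuousAt).continuousWithinAt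

set_option maxHeartbeats 1000000 in
/-- If `β > r`, `c > 1/3`, `βc > β - 2r` and `c < β²/(27r²)`, then `f` has exactly
two zeros `0 < û₁ < û₂ < 1` in `(0,1)`, `Ψ₂` has a local maximum at `û₁` and a local
minimum at `û₂`, and if `Ψ₂(û₂) < θ < Ψ₂(û₁)` and `θ < (β-r)(1+c)` then `Ψ₂(u) = θ`
has exactly three solutions in `(0,1)`, i.e. `V₂` has exactly three positive fixed
points. -/
theorem three_positive_fixed_points_V2 (β r θ c : ℝ) (hβ : 0 < β) (hr : 0 < r)
    (hθ : 0 < θ) (hc : 0 < c) (hβr : r < β) (hc3 : 1 / 3 < c)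
    (hf1 : β - 2 * r < β * c) (hc2 : c < β ^ 2 / (27 * r ^ 2)) :
    ∃ u1 u2 : ℝ, 0 < u1 ∧ u1 < u2 ∧ u2 < 1 ∧
      fcub β r c u1 = 0 ∧ fcub β r c u2 = 0 ∧
      (∀ u ∈ Set.Ioo (0 : ℝ) 1, fcub β r c u = 0 → u = u1 ∨ u = u2) ∧
      IsLocalMax (Psi2 β r c) u1 ∧ IsLocalMin (Psi2 β r c) u2 ∧
      (Psi2 β r c u2 < θ → θ < Psi2 β r c u1 → θ < (β - r) * (1 + c) →
        {u : ℝ | u ∈ Set.Ioo (0 : ℝ) 1 ∧ Psi2 β r c u = θ}.ncard = 3 ∧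
        {p : ℝ × ℝ | 0 < p.1 ∧ 0 < p.2 ∧ V2 β r θ c p = p}.ncard = 3) := by
  -- the critical point s of fcub
  obtain ⟨s, hs_pos, h3cs⟩ : ∃ s : ℝ, 0 < s ∧ 3 * c * s ^ 2 = 1 := by
    refine ⟨Real.sqrt (1 / (3 * c)), Real.sqrt_pos.mpr (by positivity), ?_⟩
    rw [Real.sq_sqrt (by positivity : (0:ℝ) ≤ 1 / (3 * c))]
    field_simp
  have hs_lt1 : s < 1 := by nlinarith [sq_nonneg (s - 1), hs_pos, h3cs, hc3]
  have hc2' : c * (27 * r ^ 2) < β ^ 2 := (lt_div_iff₀ (by positivity)).mp hc2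
  have hfs_neg : fcub β r c s < 0 := by
    have h1 : (3 * r) ^ 2 < (β * s) ^ 2 := by nlinarith
    have h2 : 3 * r < β * s := lt_of_pow_lt_pow_left₀ 2 (by positivity) h1
    have h3 : fcub β r c s = 2 * r - 2 / 3 * (β * s) := by
      unfold fcub; nlinarith [h3cs]
    rw [h3]; linarith
  have hf0 : fcub β r c 0 = 2 * r := by simp [fcub]
  have hf1' : 0 < fcub β r c 1 := by unfold fcub; nlinarith
  -- monotonicity of fcub
  have hanti : StrictAntiOn (fcub β r c) (Set.Icc 0 s) := by
    apply strictAntiOn_of_deriv_neg (convex_Icc 0 s) (fcub_cont β r c).continuousOn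
    intro x hx
    rw [interior_Icc, Set.mem_Ioo] at hx
    rw [(fcub_hasDerivAt β r c x).deriv]
    have h4 : x ^ 2 < s ^ 2 := by nlinarith [hx.1, hx.2]
    have h5 : 3 * c * x ^ 2 < 1 := by nlinarith
    nlinarith
  have hmono : StrictMonoOn (fcub β r c) (Set.Icc s 1) := by
    apply strictMonoOn_of_deriv_pos (convex_Icc s 1) (fcub_cont β r c).continuousOn
    intro x hx
    rw [interior_Icc, Set.mem_Ioo] at hx
    rw [(fcub_hasDerivAt β r c x).deriv]
    have h4 : s ^ 2 < x ^ 2 := by nlinarith [hx.1, hx.2, hs_pos]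
    have h5 : 1 < 3 * c * x ^ 2 := by nlinarith
    nlinarith
  -- the two zeros
  obtain ⟨u1, hu1, hfu1⟩ : ∃ u1 ∈ Set.Ioo (0:ℝ) s, fcub β r c u1 = 0 := by
    have h0 : (0:ℝ) ∈ Set.Ioo (fcub β r c s) (fcub β r c 0) := by
      rw [hf0]; exact ⟨hfs_neg, by linarith⟩
    obtain ⟨u1, hu1, h⟩ := intermediate_value_Ioo' (le_of_lt hs_pos)
      (fcub_cont β r c).continuousOn h0
    exact ⟨u1, hu1, h⟩
  obtain ⟨u2, hu2, hfu2⟩ : ∃ u2 ∈ Set.Ioo s 1, fcub β r c u2 = 0 := by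
    obtain ⟨u2, hu2, h⟩ := intermediate_value_Ioo (le_of_lt hs_lt1)
      (fcub_cont β r c).continuousOn ⟨hfs_neg, hf1'⟩
    exact ⟨u2, hu2, h⟩
  have h01 : 0 < u1 := hu1.1
  have h12 : u1 < u2 := lt_trans hu1.2 hu2.1
  have h21 : u2 < 1 := hu2.2
  have h02 : 0 < u2 := lt_trans h01 h12
  -- uniqueness of zeros
  have huniq : ∀ u ∈ Set.Ioo (0:ℝ) 1, fcub β r c u = 0 → u = u1 ∨ u = u2 := by
    intro u hu hfu
    rcases lt_trichotomy u s with h | h | h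
    · left
      exact hanti.injOn ⟨le_of_lt hu.1, le_of_lt h⟩
        ⟨le_of_lt hu1.1, le_of_lt hu1.2⟩ (by rw [hfu, hfu1])
    · exact absurd (h ▸ hfu) (ne_of_lt hfs_neg)
    · right
      exact hmono.injOn ⟨le_of_lt h, le_of_lt hu.2⟩
        ⟨le_of_lt hu2.1, le_of_lt hu2.2⟩ (by rw [hfu, hfu2])
  -- sign of fcub on the three branches
  have hfpos1 : ∀ x ∈ Set.Ioo (0:ℝ) u1, 0 < fcub β r c x := by
    intro x hx
    have := hanti ⟨le_of_lt hx.1, le_of_lt (lt_trans hx.2 hu1.2)⟩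
      ⟨le_of_lt h01, le_of_lt hu1.2⟩ hx.2
    rw [hfu1] at this; exact this
  have hfneg : ∀ x ∈ Set.Ioo u1 u2, fcub β r c x < 0 := by
    intro x hx
    rcases lt_trichotomy x s with h | h | h
    · have := hanti ⟨le_of_lt h01, le_of_lt hu1.2⟩
        ⟨le_of_lt (lt_trans h01 hx.1), le_of_lt h⟩ hx.1
      rw [hfu1] at this; exact this
    · exact h ▸ hfs_neg
    · have := hmono ⟨le_of_lt h, le_of_lt (lt_trans hx.2 h21)⟩
        ⟨le_of_lt hu2.1, le_of_lt h21⟩ hx.2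
      rw [hfu2] at this; exact this
  have hfpos2 : ∀ x ∈ Set.Ioo u2 (1:ℝ), 0 < fcub β r c x := by
    intro x hx
    have := hmono ⟨le_of_lt hu2.1, le_of_lt h21⟩
      ⟨le_of_lt (lt_trans hu2.1 hx.1), le_of_lt hx.2⟩ hx.1
    rw [hfu2] at this; exact this
  -- monotonicity of Psi2 on the three branches
  have M1 : StrictMonoOn (Psi2 β r c) (Set.Ioc 0 u1) := by
    apply strictMonoOn_of_deriv_pos (convex_Ioc 0 u1)
      (psi2_contOn β r c (fun x hx => ne_of_gt hx.1))
    intro x hx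
    rw [interior_Ioc, Set.mem_Ioo] at hx
    rw [(psi2_hasDerivAt β r c (ne_of_gt hx.1)).deriv]
    exact div_pos (hfpos1 x hx) (pow_pos hx.1 3)
  have A : StrictAntiOn (Psi2 β r c) (Set.Icc u1 u2) := by
    apply strictAntiOn_of_deriv_neg (convex_Icc u1 u2)
      (psi2_contOn β r c (fun x hx => ne_of_gt (lt_of_lt_of_le h01 hx.1)))
    intro x hx
    rw [interior_Icc, Set.mem_Ioo] at hx
    rw [(psi2_hasDerivAt β r c (ne_of_gt (lt_trans h01 hx.1))).deriv]
    exact div_neg_of_neg_of_pos (hfneg x hx) (pow_pos (lt_trans h01 hx.1) 3)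
  have M2 : StrictMonoOn (Psi2 β r c) (Set.Icc u2 1) := by
    apply strictMonoOn_of_deriv_pos (convex_Icc u2 1)
      (psi2_contOn β r c (fun x hx => ne_of_gt (lt_of_lt_of_le h02 hx.1)))
    intro x hx
    rw [interior_Icc, Set.mem_Ioo] at hx
    rw [(psi2_hasDerivAt β r c (ne_of_gt (lt_trans h02 hx.1))).deriv]
    exact div_pos (hfpos2 x hx) (pow_pos (lt_trans h02 hx.1) 3)
  -- local max / min
  have hmax : IsLocalMax (Psi2 β r c) u1 := by
    have hnbhd : Set.Ioo (u1 / 2) u2 ∈ nhds u1 :=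
      Ioo_mem_nhds (by linarith) h12
    filter_upwards [hnbhd] with x hx
    rcases le_or_gt x u1 with h | h
    · rcases eq_or_lt_of_le h with h' | h'
      · exact le_of_eq (by rw [h'])
      · exact le_of_lt (M1 ⟨by linarith [hx.1], le_of_lt h'⟩ ⟨h01, le_refl _⟩ h')
    · exact le_of_lt (A ⟨le_refl _, le_of_lt h12⟩ ⟨le_of_lt h, le_of_lt hx.2⟩ h)
  have hmin : IsLocalMin (Psi2 β r c) u2 := by
    have hnbhd : Set.Ioo u1 1 ∈ nhds u2 := Ioo_mem_nhds h12 h21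
    filter_upwards [hnbhd] with x hx
    rcases le_or_gt x u2 with h | h
    · rcases eq_or_lt_of_le h with h' | h'
      · exact le_of_eq (by rw [h'])
      · exact le_of_lt (A ⟨le_of_lt hx.1, le_of_lt h'⟩ ⟨le_of_lt h12, le_refl _⟩ h')
    · exact le_of_lt (M2 ⟨le_refl _, le_of_lt h21⟩ ⟨le_of_lt h, le_of_lt hx.2⟩ h)
  refine ⟨u1, u2, h01, h12, h21, hfu1, hfu2, huniq, hmax, hmin, ?_⟩
  intro ht1 ht2 ht3
  -- counting solutions of Psi2 = θ
  have hcard : {u : ℝ | u ∈ Set.Ioo (0 : ℝ) 1 ∧ Psi2 β r c u = θ}.ncard = 3 := by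
    have hPsi1 : Psi2 β r c 1 = (β - r) * (1 + c) := by unfold Psi2; norm_num
    set ε : ℝ := min (u1 / 2) (r / (2 * β)) with hε_def
    have hε_pos : 0 < ε := lt_min (by linarith) (by positivity)
    have hε_lt : ε < u1 := lt_of_le_of_lt (min_le_left _ _) (by linarith)
    have hPsiε : Psi2 β r c ε < θ := by
      have h1 : β * ε ≤ r / 2 := by
        have := min_le_right (u1 / 2) (r / (2 * β))
        calc β * ε ≤ β * (r / (2 * β)) := by
              apply mul_le_mul_of_nonneg_left this (le_of_lt hβ)
          _ = r / 2 := by field_simp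
      have h2 : Psi2 β r c ε < 0 := by
        unfold Psi2
        apply div_neg_of_neg_of_pos
        · apply mul_neg_of_neg_of_pos (by linarith) (by positivity)
        · positivity
      linarith
    obtain ⟨w1, hw1, hPw1⟩ := intermediate_value_Ioo (le_of_lt hε_lt)
      (psi2_contOn β r c (fun x hx => ne_of_gt (lt_of_lt_of_le hε_pos hx.1)))
      (Set.mem_Ioo.mpr ⟨hPsiε, ht2⟩)
    obtain ⟨w2, hw2, hPw2⟩ := intermediate_value_Ioo' (le_of_lt h12)
      (psi2_contOn β r c (fun x hx => ne_of_gt (lt_of_lt_of_le h01 hx.1)))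
      (Set.mem_Ioo.mpr ⟨ht1, ht2⟩)
    obtain ⟨w3, hw3, hPw3⟩ := intermediate_value_Ioo (le_of_lt h21)
      (psi2_contOn β r c (fun x hx => ne_of_gt (lt_of_lt_of_le h02 hx.1)))
      (Set.mem_Ioo.mpr ⟨ht1, hPsi1 ▸ ht3⟩)
    have hset : {u : ℝ | u ∈ Set.Ioo (0 : ℝ) 1 ∧ Psi2 β r c u = θ} = {w1, w2, w3} := by
      ext u
      simp only [Set.mem_setOf_eq, Set.mem_insert_iff, Set.mem_singleton_iff, Set.mem_Ioo]
      constructor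
      · rintro ⟨⟨hu0, hu1'⟩, hPu⟩
        rcases le_or_gt u u1 with h | h
        · left
          exact M1.injOn ⟨hu0, h⟩ ⟨lt_trans hε_pos hw1.1, le_of_lt hw1.2⟩
            (by rw [hPu, hPw1])
        · rcases le_or_gt u u2 with h' | h'
          · right; left
            exact A.injOn ⟨le_of_lt h, h'⟩ ⟨le_of_lt hw2.1, le_of_lt hw2.2⟩
              (by rw [hPu, hPw2])
          · right; right
            exact M2.injOn ⟨le_of_lt h', le_of_lt hu1'⟩ ⟨le_of_lt hw3.1, le_of_lt hw3.2⟩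
              (by rw [hPu, hPw3])
      · rintro (rfl | rfl | rfl)
        · exact ⟨⟨lt_trans hε_pos hw1.1, lt_trans hw1.2 (lt_trans h12 h21)⟩, hPw1⟩
        · exact ⟨⟨lt_trans h01 hw2.1, lt_trans hw2.2 h21⟩, hPw2⟩
        · exact ⟨⟨lt_trans h02 hw3.1, hw3.2⟩, hPw3⟩
    rw [hset, Set.ncard_eq_three]
    refine ⟨w1, w2, w3, ?_, ?_, ?_, rfl⟩
    · exact ne_of_lt (lt_trans hw1.2 hw2.1)
    · exact ne_of_lt (lt_trans hw1.2 (lt_trans (lt_trans hw2.1 hw2.2) hw3.1))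
    · exact ne_of_lt (lt_trans hw2.2 hw3.1)
  refine ⟨hcard, ?_⟩
  -- fixed points of V2
  have himg : {p : ℝ × ℝ | 0 < p.1 ∧ 0 < p.2 ∧ V2 β r θ c p = p} =
      (fun u : ℝ => (u, 1 - u)) '' {u : ℝ | u ∈ Set.Ioo (0 : ℝ) 1 ∧ Psi2 β r c u = θ} := by
    ext ⟨u, v⟩
    simp only [Set.mem_setOf_eq, Set.mem_image, Set.mem_Ioo, Prod.mk.injEq, V2]
    constructor
    · rintro ⟨hu, hv, heq⟩
      have h1 : u * (2 - u) - u * v = u := heq.1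
      have h2 : β * u * v + (1 - r) * v - θ * u ^ 2 * v / (1 + c * u ^ 2) = v := heq.2
      have hv_eq : v = 1 - u := by
        have : u * (1 - u - v) = 0 := by linarith [h1]
        rcases mul_eq_zero.mp this with h | h
        · exact absurd h (ne_of_gt hu)
        · linarith
      have hu1 : u < 1 := by rw [hv_eq] at hv; linarith
      have hpos : (0:ℝ) < 1 + c * u ^ 2 := by positivity
      have hkey : (β * u - r) * (1 + c * u ^ 2) = θ * u ^ 2 := by
        have h3 : (β * u * v + (1 - r) * v - θ * u ^ 2 * v / (1 + c * u ^ 2)) * (1 + c * u ^ 2)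
            = v * (1 + c * u ^ 2) := by rw [h2]
        have h4 : β * u * v * (1 + c * u ^ 2) + (1 - r) * v * (1 + c * u ^ 2)
            - θ * u ^ 2 * v = v * (1 + c * u ^ 2) := by
          rw [sub_mul, div_mul_cancel₀ _ (ne_of_gt hpos)] at h3
          linarith [h3]
        have h5 : v * ((β * u - r) * (1 + c * u ^ 2) - θ * u ^ 2) = 0 := by
          ring_nf; nlinarith [h4]
        rcases mul_eq_zero.mp h5 with h | h
        · exact absurd h (ne_of_gt hv)
        · linarith
      refine ⟨u, ⟨⟨hu, hu1⟩, ?_⟩, rfl, hv_eq.symm⟩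
      unfold Psi2
      rw [hkey]
      field_simp
    · rintro ⟨x, ⟨⟨hx0, hx1⟩, hPx⟩, rfl, rfl⟩
      have hpos : (0:ℝ) < 1 + c * x ^ 2 := by positivity
      have hkey : (β * x - r) * (1 + c * x ^ 2) = θ * x ^ 2 := by
        unfold Psi2 at hPx
        field_simp at hPx
        linarith [hPx]
      refine ⟨hx0, by linarith, ?_⟩
      have hfst : x * (2 - x) - x * (1 - x) = x := by ring
      have hsnd : β * x * (1 - x) + (1 - r) * (1 - x) - θ * x ^ 2 * (1 - x) / (1 + c * x ^ 2)
          = 1 - x := by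
        field_simp
        nlinarith [hkey]
      exact ⟨hfst, hsnd⟩
  rw [himg, Set.ncard_image_of_injective _
    (fun a b h => by simpa using (Prod.mk.injEq _ _ _ _ ▸ h).1)]
  exact hcard
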